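/- arXiv:0707.1739 — 2 statements merged into one kernel-verified Lean document; each statement's English description precedes it below -/
import Mathlib

section
/- Stieltjes inversion: if μ is a probability measure on ℝ with Cauchy transform G, then the measures with density x ↦ −(1/π) Im G(x + iε) with respect to Lebesgue measure converge weakly to μ as ε ↘ 0. -/
open MeasureTheory Filter

lemma im_ker (x ε t : ℝ) :
    ((((x : ℂ) + ε * Complex.I) - (t : ℂ))⁻¹).im = -(ε / ((x - t)^2 + ε^2)) := by
  rw [Complex.inv_im]
  simp [Complex.normSq_apply]
  ring_nf

lemma ker_integrable (μ : Measure ℝ) [IsProbabilityMeasure μ] {x ε : ℝ} (hε : 0 < ε) :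
    Integrable (fun t : ℝ => (((x : ℂ) + ε * Complex.I) - (t : ℂ))⁻¹) μ := by
  have hne : ∀ t : ℝ, ((x : ℂ) + ε * Complex.I) - (t : ℂ) ≠ 0 := by
    intro t h
    have := congrArg Complex.im h
    simp at this
    exact hε.ne' this
  have hc : Continuous fun t : ℝ => (((x : ℂ) + ε * Complex.I) - (t : ℂ))⁻¹ :=
    ((continuous_const.sub Complex.continuous_ofReal).inv₀ hne)
  refine (integrable_const ε⁻¹).mono' hc.aestronglyMeasurable (ae_of_all _ fun t => ?_)
  rw [norm_inv]
  have him : |(((x : ℂ) + ε * Complex.I) - (t : ℂ)).im| ≤ ‖((x : ℂ) + ε * Complex.I) - (t : ℂ)‖ :=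
    Complex.abs_im_le_norm _
  have : ε ≤ ‖((x : ℂ) + ε * Complex.I) - (t : ℂ)‖ := by
    simpa [abs_of_pos hε] using him
  calc ‖((x : ℂ) + ε * Complex.I) - (t : ℂ)‖⁻¹ ≤ ε⁻¹ := by
        exact inv_anti₀ hε this


lemma inv_sq_integrable {ε : ℝ} (hε : 0 < ε) (t : ℝ) :
    Integrable (fun x : ℝ => ((x - t)^2 + ε^2)⁻¹) := by
  have h0 : Integrable (fun x : ℝ => (1 + x^2)⁻¹) := integrable_inv_one_add_sq
  have h1 : Integrable (fun x : ℝ => (1 + (ε⁻¹ * x)^2)⁻¹) :=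
    h0.comp_mul_left' (inv_ne_zero hε.ne')
  have h2 : Integrable (fun x : ℝ => (x^2 + ε^2)⁻¹) := by
    have := h1.const_mul (ε^2)⁻¹
    refine this.congr (ae_of_all _ fun x => ?_)
    field_simp
    ring
  exact h2.comp_sub_right t

lemma poisson_subst (f : BoundedContinuousFunction ℝ ℝ) {ε : ℝ} (hε : 0 < ε) (t : ℝ) :
    ∫ x : ℝ, f x * (ε * ((x - t)^2 + ε^2)⁻¹) =
      ∫ u : ℝ, f (t + ε * u) * (1 + u^2)⁻¹ := by
  have h1 : ∫ x : ℝ, f x * (ε * ((x - t)^2 + ε^2)⁻¹) =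
      ∫ y : ℝ, f (y + t) * (ε * (y^2 + ε^2)⁻¹) := by
    rw [← integral_add_right_eq_self (fun x : ℝ => f x * (ε * ((x - t)^2 + ε^2)⁻¹)) t]
    simp
  rw [h1]
  have h2 := MeasureTheory.Measure.integral_comp_mul_left
    (fun y : ℝ => f (y + t) * (ε * (y^2 + ε^2)⁻¹)) ε
  rw [abs_of_pos (inv_pos.2 hε), smul_eq_mul] at h2
  have h3 : ∫ y : ℝ, f (y + t) * (ε * (y^2 + ε^2)⁻¹)
      = ε * ∫ u : ℝ, f (ε * u + t) * (ε * ((ε * u)^2 + ε^2)⁻¹) := by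
    rw [h2, ← mul_assoc, mul_inv_cancel₀ hε.ne', one_mul]
  rw [h3, ← integral_const_mul]
  congr 1
  ext u
  have hd : (ε * u)^2 + ε^2 = ε^2 * (1 + u^2) := by ring
  rw [hd, add_comm (ε*u) t, mul_inv]
  have : ε * (f (t + ε * u) * (ε * ((ε ^ 2)⁻¹ * (1 + u ^ 2)⁻¹)))
      = (ε * ε * (ε^2)⁻¹) * (f (t + ε * u) * (1 + u ^ 2)⁻¹) := by ring
  rw [this]
  have h4 : ε * ε * (ε^2)⁻¹ = 1 := by field_simp
  rw [h4, one_mul]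

lemma H_int (f : BoundedContinuousFunction ℝ ℝ) (ε t : ℝ) :
    Integrable (fun u : ℝ => f (t + ε * u) * (1 + u^2)⁻¹) := by
  refine integrable_inv_one_add_sq.bdd_mul ?_ (ae_of_all _ fun u => f.norm_coe_le_norm _)
  exact (f.continuous.comp (continuous_const.add (continuous_const.mul continuous_id))).aestronglyMeasurable

lemma H_bound (f : BoundedContinuousFunction ℝ ℝ) (ε t : ℝ) :
    ‖∫ u : ℝ, f (t + ε * u) * (1 + u^2)⁻¹‖ ≤ ‖f‖ * Real.pi := by
  calc ‖∫ u : ℝ, f (t + ε * u) * (1 + u^2)⁻¹‖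
      ≤ ∫ u : ℝ, ‖f (t + ε * u) * (1 + u^2)⁻¹‖ := norm_integral_le_integral_norm _
    _ ≤ ∫ u : ℝ, ‖f‖ * (1 + u^2)⁻¹ := by
        refine integral_mono (H_int f ε t).norm (integrable_inv_one_add_sq.const_mul _) fun u => ?_
        rw [norm_mul, Real.norm_of_nonneg (by positivity : (0:ℝ) ≤ (1 + u^2)⁻¹)]
        exact mul_le_mul_of_nonneg_right (f.norm_coe_le_norm _) (by positivity)
    _ = ‖f‖ * Real.pi := by rw [integral_const_mul, integral_univ_inv_one_add_sq]

lemma H_tendsto (f : BoundedContinuousFunction ℝ ℝ) (t : ℝ) :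
    Tendsto (fun ε : ℝ => ∫ u : ℝ, f (t + ε * u) * (1 + u^2)⁻¹)
      (nhdsWithin 0 (Set.Ioi 0)) (nhds (f t * Real.pi)) := by
  have h0 : f t * Real.pi = ∫ u : ℝ, f t * (1 + u^2)⁻¹ := by
    rw [integral_const_mul, integral_univ_inv_one_add_sq]
  rw [h0]
  refine tendsto_integral_filter_of_dominated_convergence (fun u => ‖f‖ * (1 + u^2)⁻¹)
    (Eventually.of_forall fun ε => (H_int f ε t).aestronglyMeasurable)
    (Eventually.of_forall fun ε => ae_of_all _ fun u => ?_)
    (integrable_inv_one_add_sq.const_mul _)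
    (ae_of_all _ fun u => ?_)
  · rw [norm_mul, Real.norm_of_nonneg (by positivity : (0:ℝ) ≤ (1 + u^2)⁻¹)]
    exact mul_le_mul_of_nonneg_right (f.norm_coe_le_norm _) (by positivity)
  · have h1 : Tendsto (fun ε : ℝ => t + ε * u) (nhdsWithin 0 (Set.Ioi 0)) (nhds t) := by
      have h2 : Continuous (fun ε : ℝ => t + ε * u) := by continuity
      have h3 := h2.tendsto 0
      simp only [zero_mul, add_zero] at h3
      exact h3.mono_left nhdsWithin_le_nhds
    exact ((f.continuous.tendsto t).comp h1).mul tendsto_const_nhds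

lemma kernel_int_eq {ε : ℝ} (hε : 0 < ε) (t : ℝ) :
    ∫ x : ℝ, ε * ((x - t)^2 + ε^2)⁻¹ = Real.pi := by
  have h := poisson_subst (BoundedContinuousFunction.const ℝ (1:ℝ)) hε t
  simpa [integral_univ_inv_one_add_sq] using h

lemma P_int (f : BoundedContinuousFunction ℝ ℝ) {ε : ℝ} (hε : 0 < ε) (t : ℝ) :
    Integrable (fun x : ℝ => f x * (ε * ((x - t)^2 + ε^2)⁻¹)) := by
  exact ((inv_sq_integrable hε t).const_mul ε).bdd_mul f.continuous.aestronglyMeasurable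
    (ae_of_all _ fun x => f.norm_coe_le_norm _)

lemma prod_int (μ : Measure ℝ) [IsProbabilityMeasure μ] (f : BoundedContinuousFunction ℝ ℝ)
    {ε : ℝ} (hε : 0 < ε) :
    Integrable (fun p : ℝ × ℝ => f p.1 * (ε * ((p.1 - p.2)^2 + ε^2)⁻¹))
      ((volume : Measure ℝ).prod μ) := by
  have hc : Continuous fun p : ℝ × ℝ => f p.1 * (ε * ((p.1 - p.2)^2 + ε^2)⁻¹) := by
    refine (f.continuous.comp continuous_fst).mul (continuous_const.mul (Continuous.inv₀ ?_ ?_))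
    · exact (((continuous_fst.sub continuous_snd).pow 2).add continuous_const)
    · intro p; positivity
  refine (integrable_prod_iff' hc.aestronglyMeasurable).2 ⟨?_, ?_⟩
  · exact ae_of_all _ fun t => P_int f hε t
  · refine (integrable_const (‖f‖ * Real.pi)).mono'
      (hc.norm.stronglyMeasurable.integral_prod_left'.aestronglyMeasurable) (ae_of_all _ fun t => ?_)
    have hnn : 0 ≤ ∫ x : ℝ, ‖f x * (ε * ((x - t)^2 + ε^2)⁻¹)‖ :=
      integral_nonneg fun x => norm_nonneg _
    rw [Real.norm_of_nonneg hnn]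
    calc ∫ x : ℝ, ‖f x * (ε * ((x - t)^2 + ε^2)⁻¹)‖
        ≤ ∫ x : ℝ, ‖f‖ * (ε * ((x - t)^2 + ε^2)⁻¹) := by
          refine integral_mono (P_int f hε t).norm
            (((inv_sq_integrable hε t).const_mul ε).const_mul ‖f‖) fun x => ?_
          rw [norm_mul, Real.norm_of_nonneg (by positivity : (0:ℝ) ≤ ε * ((x - t)^2 + ε^2)⁻¹)]
          exact mul_le_mul_of_nonneg_right (f.norm_coe_le_norm _) (by positivity)
      _ = ‖f‖ * Real.pi := by rw [integral_const_mul, kernel_int_eq hε]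

theorem stieltjes_inversion (μ : Measure ℝ) [IsProbabilityMeasure μ] :
    ∀ f : BoundedContinuousFunction ℝ ℝ,
      Tendsto
        (fun ε : ℝ =>
          ∫ x : ℝ,
            f x * (-(1 / Real.pi) *
              (∫ t : ℝ, (((x : ℂ) + ε * Complex.I) - (t : ℂ))⁻¹ ∂μ).im))
        (nhdsWithin 0 (Set.Ioi 0))
        (nhds (∫ x, f x ∂μ)) := by
  intro f
  have heq : ∀ ε ∈ Set.Ioi (0:ℝ),
      (∫ x : ℝ, f x * (-(1 / Real.pi) *
          (∫ t : ℝ, (((x : ℂ) + ε * Complex.I) - (t : ℂ))⁻¹ ∂μ).im))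
        = (1 / Real.pi) * ∫ t, (∫ u : ℝ, f (t + ε * u) * (1 + u^2)⁻¹) ∂μ := by
    intro ε hε
    have hε' : (0:ℝ) < ε := hε
    have hpt : ∀ x : ℝ,
        f x * (-(1 / Real.pi) * (∫ t : ℝ, (((x : ℂ) + ε * Complex.I) - (t : ℂ))⁻¹ ∂μ).im)
          = (1 / Real.pi) * ∫ t, f x * (ε * ((x - t)^2 + ε^2)⁻¹) ∂μ := by
      intro x
      have h1 : (∫ t : ℝ, (((x : ℂ) + ε * Complex.I) - (t : ℂ))⁻¹ ∂μ).im
          = -∫ t, ε * ((x - t)^2 + ε^2)⁻¹ ∂μ := by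
        rw [← RCLike.im_eq_complex_im, ← integral_im (ker_integrable μ hε'), ← integral_neg]
        refine integral_congr_ae (ae_of_all _ fun t => ?_)
        simp only [RCLike.im_eq_complex_im, im_ker, div_eq_mul_inv]
      rw [h1]
      simp only [integral_const_mul]
      ring
    calc (∫ x : ℝ, f x * (-(1 / Real.pi) *
            (∫ t : ℝ, (((x : ℂ) + ε * Complex.I) - (t : ℂ))⁻¹ ∂μ).im))
        = ∫ x : ℝ, (1 / Real.pi) * ∫ t, f x * (ε * ((x - t)^2 + ε^2)⁻¹) ∂μ := by
          exact integral_congr_ae (ae_of_all _ hpt)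
      _ = (1 / Real.pi) * ∫ x : ℝ, ∫ t, f x * (ε * ((x - t)^2 + ε^2)⁻¹) ∂μ :=
          integral_const_mul _ _
      _ = (1 / Real.pi) * ∫ t, (∫ x : ℝ, f x * (ε * ((x - t)^2 + ε^2)⁻¹)) ∂μ := by
          rw [integral_integral_swap (f := fun x t => f x * (ε * ((x - t)^2 + ε^2)⁻¹))
            (prod_int μ f hε')]
      _ = (1 / Real.pi) * ∫ t, (∫ u : ℝ, f (t + ε * u) * (1 + u^2)⁻¹) ∂μ := by
          congr 1
          exact integral_congr_ae (ae_of_all _ fun t => poisson_subst f hε' t)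
  have h2 : Tendsto (fun ε : ℝ => ∫ t, (∫ u : ℝ, f (t + ε * u) * (1 + u^2)⁻¹) ∂μ)
      (nhdsWithin 0 (Set.Ioi 0)) (nhds (∫ t, f t * Real.pi ∂μ)) := by
    refine tendsto_integral_filter_of_dominated_convergence (fun _ => ‖f‖ * Real.pi)
      ?_ ?_ (integrable_const _) (ae_of_all _ fun t => H_tendsto f t)
    · filter_upwards [self_mem_nhdsWithin] with ε hε
      exact ((prod_int μ f hε).integral_prod_right.aestronglyMeasurable).congr
        (ae_of_all _ fun t => poisson_subst f hε t)
    · exact Eventually.of_forall fun ε => ae_of_all _ fun t => H_bound f ε t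
  have h3 := h2.const_mul (1 / Real.pi)
  have h4 : (1 / Real.pi) * ∫ t, f t * Real.pi ∂μ = ∫ x, f x ∂μ := by
    rw [integral_mul_const]
    field_simp
  rw [h4] at h3
  exact h3.congr' (eventuallyEq_of_mem self_mem_nhdsWithin fun ε hε => (heq ε hε).symm)
end

section
/- Let d ≥ 1 and η : M_d(ℂ) → M_d(ℂ) be a completely positive linear map. For fixed z ∈ ℂ⁺, define F(G) = (z·I − η(G))⁻¹ on the domain of matrices G with negative definite imaginary part. Then F maps this domain into itself: if Im G = (G − G*)/(2i) is negative definite, then z·I − η(G) is invertible and Im F(G) is negative definite. -/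
open Matrix ComplexOrder

/-- Imaginary part of a complex matrix: `(G - G*)/(2i)`. -/
noncomputable def imPart {d : ℕ} (G : Matrix (Fin d) (Fin d) ℂ) :
    Matrix (Fin d) (Fin d) ℂ :=
  (2 * Complex.I)⁻¹ • (G - Gᴴ)

/-- Every Hermitian matrix is a difference of two positive semidefinite matrices. -/
lemma herm_decomp {d : ℕ} (H : Matrix (Fin d) (Fin d) ℂ) (hH : H.IsHermitian) :
    ∃ P Q : Matrix (Fin d) (Fin d) ℂ, P.PosSemidef ∧ Q.PosSemidef ∧ H = P - Q := by
  classical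
  set c : ℝ := ∑ i, |hH.eigenvalues i| with hc
  have hc0 : 0 ≤ c := Finset.sum_nonneg fun i _ => abs_nonneg _
  refine ⟨H + (c : ℂ) • 1, (c : ℂ) • 1, ?_, ?_, by abel⟩
  · have hU := hH.spectral_theorem
    have h1 : H + (c : ℂ) • 1 =
        (hH.eigenvectorUnitary : Matrix (Fin d) (Fin d) ℂ) *
          diagonal (fun i => ((hH.eigenvalues i + c : ℝ) : ℂ)) *
          (hH.eigenvectorUnitary : Matrix (Fin d) (Fin d) ℂ)ᴴ := by
      have hdiag : diagonal (fun i => ((hH.eigenvalues i + c : ℝ) : ℂ)) =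
          diagonal (RCLike.ofReal ∘ hH.eigenvalues) + (c : ℂ) • 1 := by
        rw [smul_one_eq_diagonal, diagonal_add]
        funext i; simp [Function.comp]
      rw [hdiag, mul_add, add_mul]
      have hUU : (hH.eigenvectorUnitary : Matrix (Fin d) (Fin d) ℂ) *
          (hH.eigenvectorUnitary : Matrix (Fin d) (Fin d) ℂ)ᴴ = 1 := by
        simpa [star_eq_conjTranspose] using
          (Matrix.mem_unitaryGroup_iff.mp hH.eigenvectorUnitary.2)
      rw [mul_smul_comm, smul_mul_assoc, mul_one, hUU]
      nth_rewrite 1 [hU]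
      simp [star_eq_conjTranspose]
    rw [h1]
    refine (posSemidef_diagonal_iff.mpr fun i => ?_).mul_mul_conjTranspose_same _
    have h2 : 0 ≤ hH.eigenvalues i + c := by
      have h3 : |hH.eigenvalues i| ≤ c :=
        Finset.single_le_sum (f := fun i => |hH.eigenvalues i|)
          (fun i _ => abs_nonneg _) (Finset.mem_univ i)
      have := neg_abs_le (hH.eigenvalues i); linarith
    exact Complex.zero_le_real.mpr h2
  · rw [smul_one_eq_diagonal]
    exact posSemidef_diagonal_iff.mpr fun i => Complex.zero_le_real.mpr hc0

/-- A positive map sends Hermitian matrices to Hermitian matrices. -/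
lemma eta_herm {d : ℕ} (η : Matrix (Fin d) (Fin d) ℂ →ₗ[ℂ] Matrix (Fin d) (Fin d) ℂ)
    (hpos : ∀ M : Matrix (Fin d) (Fin d) ℂ, M.PosSemidef → (η M).PosSemidef)
    {H : Matrix (Fin d) (Fin d) ℂ} (hH : H.IsHermitian) : (η H).IsHermitian := by
  obtain ⟨P, Q, hP, hQ, rfl⟩ := herm_decomp H hH
  rw [map_sub]
  exact ((hpos P hP).isHermitian).sub ((hpos Q hQ).isHermitian)

lemma imPart_isHermitian {d : ℕ} (M : Matrix (Fin d) (Fin d) ℂ) :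
    (imPart M).IsHermitian := by
  rw [imPart, IsHermitian, conjTranspose_smul, conjTranspose_sub, conjTranspose_conjTranspose]
  rw [show star (2 * Complex.I)⁻¹ = -(2 * Complex.I)⁻¹ by
    simp [mul_inv, Complex.inv_I]]
  module

/-- A positive map is star-preserving. -/
lemma eta_conjTranspose {d : ℕ}
    (η : Matrix (Fin d) (Fin d) ℂ →ₗ[ℂ] Matrix (Fin d) (Fin d) ℂ)
    (hpos : ∀ M : Matrix (Fin d) (Fin d) ℂ, M.PosSemidef → (η M).PosSemidef)
    (M : Matrix (Fin d) (Fin d) ℂ) : η (Mᴴ) = (η M)ᴴ := by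
  have main : ∀ H K : Matrix (Fin d) (Fin d) ℂ, H.IsHermitian → K.IsHermitian →
      η ((H + Complex.I • K)ᴴ) = (η (H + Complex.I • K))ᴴ := by
    intro H K hH hK
    have h1 : (H + Complex.I • K)ᴴ = H - Complex.I • K := by
      rw [conjTranspose_add, conjTranspose_smul, hH.eq, hK.eq]
      rw [show star Complex.I = -Complex.I by simp]
      module
    rw [h1, map_sub, map_add, _root_.map_smul, conjTranspose_add, conjTranspose_smul,
      (eta_herm η hpos hH).eq, (eta_herm η hpos hK).eq,
      show star Complex.I = -Complex.I by simp]
    module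
  have hM : M = (2 : ℂ)⁻¹ • (M + Mᴴ) + Complex.I • imPart M := by
    rw [imPart, smul_smul, show Complex.I * (2 * Complex.I)⁻¹ = (2:ℂ)⁻¹ by
      rw [mul_inv, Complex.inv_I]; ring_nf; rw [Complex.I_sq]; ring]
    module
  have hH : ((2 : ℂ)⁻¹ • (M + Mᴴ)).IsHermitian := by
    rw [IsHermitian, conjTranspose_smul, conjTranspose_add, conjTranspose_conjTranspose]
    rw [show star (2:ℂ)⁻¹ = (2:ℂ)⁻¹ by simp]
    module
  calc η (Mᴴ) = η (((2 : ℂ)⁻¹ • (M + Mᴴ) + Complex.I • imPart M)ᴴ) := by rw [← hM]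
    _ = (η ((2 : ℂ)⁻¹ • (M + Mᴴ) + Complex.I • imPart M))ᴴ :=
        main _ _ hH (imPart_isHermitian M)
    _ = (η M)ᴴ := by rw [← hM]

/-- A matrix with positive definite imaginary part is invertible. -/
lemma isUnit_of_imPart_posDef {d : ℕ} {A : Matrix (Fin d) (Fin d) ℂ}
    (h : (imPart A).PosDef) : IsUnit A := by
  refine (Matrix.isUnit_iff_isUnit_det A).mpr (isUnit_iff_ne_zero.mpr ?_)
  intro hdet
  obtain ⟨v, hv, hAv⟩ := Matrix.exists_mulVec_eq_zero_iff.mpr hdet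
  have hpos := h.dotProduct_mulVec_pos hv
  have h1 : star v ⬝ᵥ Aᴴ *ᵥ v = 0 := by
    rw [dotProduct_mulVec, ← star_mulVec, hAv]
    simp
  rw [imPart, smul_mulVec, sub_mulVec, hAv, zero_sub, dotProduct_smul,
    dotProduct_neg, h1] at hpos
  simp at hpos

/-- Conjugation by an invertible matrix preserves positive definiteness. -/
lemma posDef_conj {d : ℕ} {M B : Matrix (Fin d) (Fin d) ℂ}
    (hM : M.PosDef) (hB : IsUnit B) : (Bᴴ * M * B).PosDef := by
  refine PosDef.of_dotProduct_mulVec_pos (isHermitian_conjTranspose_mul_mul B hM.1) fun x hx => ?_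
  have hBx : B *ᵥ x ≠ 0 := fun h0 => hx <| by
    have hinj := Matrix.mulVec_injective_iff_isUnit.mpr hB
    have := hinj (a₁ := x) (a₂ := 0) (by simpa using h0)
    simpa using this
  simpa only [star_mulVec, dotProduct_mulVec, vecMul_vecMul] using hM.dotProduct_mulVec_pos hBx

lemma neg_imPart_inv {d : ℕ} {A : Matrix (Fin d) (Fin d) ℂ} (hA : IsUnit A) :
    -(imPart A⁻¹) = (A⁻¹ᴴ)ᴴ * imPart A * A⁻¹ᴴ := by
  have hdet := (Matrix.isUnit_iff_isUnit_det A).mp hA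
  have h2 : A⁻¹ * A = 1 := nonsing_inv_mul A hdet
  have h3 : Aᴴ * Aᴴ⁻¹ = 1 := by
    rw [← conjTranspose_nonsing_inv, ← conjTranspose_mul, h2, conjTranspose_one]
  rw [conjTranspose_conjTranspose, imPart, imPart, conjTranspose_nonsing_inv]
  rw [Matrix.mul_smul, Matrix.smul_mul, ← smul_neg]
  congr 1
  rw [Matrix.mul_sub, h2, Matrix.sub_mul, one_mul, Matrix.mul_assoc, h3, Matrix.mul_one,
    neg_sub]

theorem semicircular_iteration_preserves_domain (d : ℕ)
    (η : Matrix (Fin d) (Fin d) ℂ →ₗ[ℂ] Matrix (Fin d) (Fin d) ℂ)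
    (hpos : ∀ M : Matrix (Fin d) (Fin d) ℂ, M.PosSemidef → (η M).PosSemidef)
    (z : ℂ) (hz : 0 < z.im)
    (G : Matrix (Fin d) (Fin d) ℂ) (hG : (-(imPart G)).PosDef) :
    IsUnit (z • (1 : Matrix (Fin d) (Fin d) ℂ) - η G) ∧
      (-(imPart ((z • (1 : Matrix (Fin d) (Fin d) ℂ) - η G)⁻¹))).PosDef := by
  set A := z • (1 : Matrix (Fin d) (Fin d) ℂ) - η G with hA
  have hImA : imPart A = (z.im : ℂ) • (1 : Matrix (Fin d) (Fin d) ℂ) + η (-(imPart G)) := by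
    rw [map_neg, imPart, imPart]
    rw [hA, conjTranspose_sub, conjTranspose_smul, conjTranspose_one,
      ← eta_conjTranspose η hpos, _root_.map_smul, map_sub]
    have hs : (2 * Complex.I)⁻¹ * (z - star z) = (z.im : ℂ) := by
      have h : z - star z = (2 * z.im : ℝ) * Complex.I := Complex.sub_conj z
      rw [h]
      have h2 : (2 * Complex.I) ≠ 0 := by simp [Complex.I_ne_zero]
      field_simp
      push_cast
      ring
    match_scalars
    · linear_combination hs
    · ring
    · ring
  have hImA_pd : (imPart A).PosDef := by
    rw [hImA]
    refine Matrix.PosDef.add_posSemidef ?_ (hpos _ hG.posSemidef)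
    rw [smul_one_eq_diagonal]
    exact posDef_diagonal_iff.mpr fun i => by exact_mod_cast hz
  have hUnit : IsUnit A := isUnit_of_imPart_posDef hImA_pd
  refine ⟨hUnit, ?_⟩
  rw [neg_imPart_inv hUnit]
  have hB : IsUnit (A⁻¹ᴴ) := by
    rw [Matrix.isUnit_iff_isUnit_det, det_conjTranspose, det_nonsing_inv, isUnit_iff_ne_zero]
    have := ((Matrix.isUnit_iff_isUnit_det A).mp hUnit).ne_zero
    simp [this]
  exact posDef_conj hImA_pd hB
end
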